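/- Under the assumptions of the previous setting, if additionally f₁ = f₂ ν-almost everywhere, then D_ψ(f₁, f₂) = 0. Conversely, if D_ψ(f₁, f₂) = 0, then f₁ = f₂ ν-almost everywhere. -/
import Mathlib

open MeasureTheory

lemma bregman_pos_of_ne {ψ : ℝ → ℝ}
    (hconv : StrictConvexOn ℝ (Set.Ioi (0 : ℝ)) ψ)
    (hdiff : ∀ x ∈ Set.Ioi (0 : ℝ), DifferentiableAt ℝ ψ x)
    {a b : ℝ} (ha : 0 < a) (hb : 0 < b) (hab : a ≠ b) :
    0 < ψ a - ψ b - deriv ψ b * (a - b) := by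
  rcases lt_or_gt_of_ne hab with h | h
  · have := hconv.slope_lt_deriv ha hb h (hdiff b hb)
    rw [slope_def_field, div_lt_iff₀ (by linarith)] at this
    nlinarith
  · have := hconv.deriv_lt_slope hb ha h (hdiff b hb)
    rw [slope_def_field, lt_div_iff₀ (by linarith)] at this
    nlinarith

theorem functional_bregman_eq_zero_iff {Ω : Type*} [MeasurableSpace Ω]
    (ν : Measure Ω) [IsFiniteMeasure ν] (ψ : ℝ → ℝ)
    (hconv : StrictConvexOn ℝ (Set.Ioi (0 : ℝ)) ψ)
    (hdiff : ∀ x ∈ Set.Ioi (0 : ℝ), DifferentiableAt ℝ ψ x)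
    (f₁ f₂ : Ω → ℝ) (hf₁m : Measurable f₁) (hf₂m : Measurable f₂)
    (hf₁ : ∀ x, 0 < f₁ x) (hf₂ : ∀ x, 0 < f₂ x)
    (hint : Integrable
      (fun x => ψ (f₁ x) - ψ (f₂ x) - deriv ψ (f₂ x) * (f₁ x - f₂ x)) ν) :
    (f₁ =ᵐ[ν] f₂ →
      ∫ x, (ψ (f₁ x) - ψ (f₂ x) - deriv ψ (f₂ x) * (f₁ x - f₂ x)) ∂ν = 0) ∧
    ((∫ x, (ψ (f₁ x) - ψ (f₂ x) - deriv ψ (f₂ x) * (f₁ x - f₂ x)) ∂ν) = 0 →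
      f₁ =ᵐ[ν] f₂) := by
  have hnonneg : ∀ x, 0 ≤ ψ (f₁ x) - ψ (f₂ x) - deriv ψ (f₂ x) * (f₁ x - f₂ x) := by
    intro x
    rcases eq_or_ne (f₁ x) (f₂ x) with h | h
    · simp [h]
    · exact (bregman_pos_of_ne hconv hdiff (hf₁ x) (hf₂ x) h).le
  constructor
  · intro h
    have h0 : (fun x => ψ (f₁ x) - ψ (f₂ x) - deriv ψ (f₂ x) * (f₁ x - f₂ x)) =ᵐ[ν]
        (fun _ => (0 : ℝ)) := h.mono fun x hx => by simp [hx]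
    rw [integral_congr_ae h0, integral_zero]
  · intro h
    have := (integral_eq_zero_iff_of_nonneg hnonneg hint).mp h
    filter_upwards [this] with x hx
    by_contra hne
    simp only [Pi.zero_apply] at hx
    exact (ne_of_gt (bregman_pos_of_ne hconv hdiff (hf₁ x) (hf₂ x) hne)) hx
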